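/- For any monoid S, every automorphism φ of the skeleton category _S𝒜⁰_Sk of finitely generated free left S-acts is stable: φ(Fₙ) = Fₙ for every object Fₙ. -/

import Mathlib

open CategoryTheory

/-- `f : S × X → S × Y` is a homomorphism of free left `S`-acts, where the action of
`S` on `S × X` is `s • (t, x) = (s * t, x)`. -/
def IsActHom (S : Type) [Monoid S] {X Y : Type} (f : S × X → S × Y) : Prop :=
  ∀ (s : S) (p : S × X), f (s * p.1, p.2) = (s * (f p).1, (f p).2)

/-- The skeleton category `_S𝒜⁰_Sk` of finitely generated free left `S`-acts:
objects are natural numbers `n`, standing for the free act `Fₙ = S × Fin n`. -/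
def SkFree (S : Type) [Monoid S] : Type := ℕ

/-- The category structure on `_S𝒜⁰_Sk`: morphisms `n ⟶ m` are the `S`-equivariant maps
`S × Fin n → S × Fin m`. -/
instance (S : Type) [Monoid S] : Category (SkFree S) where
  Hom n m := {f : S × Fin n → S × Fin m // IsActHom S f}
  id n := ⟨fun p => p, fun _ _ => rfl⟩
  comp f g := ⟨fun p => g.1 (f.1 p), fun s p => by
    show g.1 (f.1 (s * p.1, p.2)) = _; rw [f.2 s p]; exact g.2 s (f.1 p)⟩

/-- An automorphism of a category `C`: a functor `C ⥤ C` admitting a functor `ψ` with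
`φ ⋙ ψ` and `ψ ⋙ φ` equal (not merely isomorphic) to the identity functor. -/
def IsCatAutomorphism {C : Type*} [Category C] (φ : C ⥤ C) : Prop :=
  ∃ ψ : C ⥤ C, φ ⋙ ψ = 𝟭 C ∧ ψ ⋙ φ = 𝟭 C

/-- The object of `SkFree S` corresponding to a natural number. -/
def ob (S : Type) [Monoid S] (n : ℕ) : SkFree S := n

section Aux
variable {S : Type} [Monoid S]

/-- Build a morphism of `SkFree S` from an equivariant map. -/
def homMk {a z : ℕ} (f : S × Fin a → S × Fin z) (h : IsActHom S f) : ob S a ⟶ ob S z :=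
  ⟨f, h⟩

/-- The underlying function of a morphism of `SkFree S`. -/
def toFun {a z : ℕ} (f : ob S a ⟶ ob S z) : S × Fin a → S × Fin z := f.1

theorem toFun_isActHom {a z : ℕ} (f : ob S a ⟶ ob S z) : IsActHom S (toFun f) := f.2

theorem toFun_comp {a b c : ℕ} (f : ob S a ⟶ ob S b) (g : ob S b ⟶ ob S c) (p) :
    toFun (f ≫ g) p = toFun g (toFun f p) := rfl

theorem toFun_id {a : ℕ} (p) : toFun (𝟙 (ob S a)) p = p := rfl

theorem hom_eq {a z : ℕ} {f g : ob S a ⟶ ob S z} (h : ∀ p, toFun f p = toFun g p) :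
    f = g := Subtype.ext (funext h)

theorem toFun_homMk {a z : ℕ} (f : S × Fin a → S × Fin z) (h : IsActHom S f) (p) :
    toFun (homMk f h) p = f p := rfl

theorem toFun_congr {a z : ℕ} {f g : ob S a ⟶ ob S z} (h : f = g) (p) :
    toFun f p = toFun g p := by rw [h]

theorem ibn {n m : ℕ} (f : ob S n ⟶ ob S m) (g : ob S m ⟶ ob S n)
    (hfg : f ≫ g = 𝟙 _) (hgf : g ≫ f = 𝟙 _) : n = m := by
  have h1 : ∀ p, toFun g (toFun f p) = p := fun p => toFun_congr hfg p
  have h2 : ∀ p, toFun f (toFun g p) = p := fun p => toFun_congr hgf p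
  have left : ∀ x : Fin n, (toFun g (1, (toFun f (1, x)).2)).2 = x := by
    intro x
    have e := toFun_isActHom g (toFun f (1, x)).1 (1, (toFun f (1, x)).2)
    simp only [mul_one, Prod.mk.eta] at e
    rw [h1] at e
    exact (congrArg Prod.snd e).symm
  have right : ∀ y : Fin m, (toFun f (1, (toFun g (1, y)).2)).2 = y := by
    intro y
    have e := toFun_isActHom f (toFun g (1, y)).1 (1, (toFun g (1, y)).2)
    simp only [mul_one, Prod.mk.eta] at e
    rw [h2] at e
    exact (congrArg Prod.snd e).symm
  have e : Fin n ≃ Fin m :=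
    ⟨fun x => (toFun f (1, x)).2, fun y => (toFun g (1, y)).2, left, right⟩
  simpa using Fintype.card_congr e

def inl' (a b : ℕ) : ob S a ⟶ ob S (a + b) :=
  homMk (fun p => (p.1, Fin.castAdd b p.2)) (fun _ _ => rfl)

def inr' (a b : ℕ) : ob S b ⟶ ob S (a + b) :=
  homMk (fun p => (p.1, Fin.natAdd a p.2)) (fun _ _ => rfl)

def copair {a b z : ℕ} (f : ob S a ⟶ ob S z) (g : ob S b ⟶ ob S z) :
    ob S (a + b) ⟶ ob S z :=
  homMk (fun p => Fin.addCases (motive := fun _ => S × Fin z)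
      (fun i => toFun f (p.1, i)) (fun j => toFun g (p.1, j)) p.2) (by
    intro s p
    obtain ⟨t, i⟩ := p
    dsimp only
    induction i using Fin.addCases with
    | left i =>
      simp only [Fin.addCases_left]
      exact toFun_isActHom f s (t, i)
    | right i =>
      simp only [Fin.addCases_right]
      exact toFun_isActHom g s (t, i))

theorem inl_copair {a b z : ℕ} (f : ob S a ⟶ ob S z) (g : ob S b ⟶ ob S z) :
    inl' a b ≫ copair f g = f := by
  apply hom_eq
  intro p
  rw [toFun_comp]
  show toFun (copair f g) (p.1, Fin.castAdd b p.2) = toFun f p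
  show Fin.addCases (motive := fun _ => S × Fin z) (fun i => toFun f (p.1, i)) (fun j => toFun g (p.1, j)) (Fin.castAdd b p.2) = toFun f p
  simp [Fin.addCases_left]

theorem inr_copair {a b z : ℕ} (f : ob S a ⟶ ob S z) (g : ob S b ⟶ ob S z) :
    inr' a b ≫ copair f g = g := by
  apply hom_eq
  intro p
  rw [toFun_comp]
  show toFun (copair f g) (p.1, Fin.natAdd a p.2) = toFun g p
  show Fin.addCases (motive := fun _ => S × Fin z) (fun i => toFun f (p.1, i)) (fun j => toFun g (p.1, j)) (Fin.natAdd a p.2) = toFun g p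
  simp [Fin.addCases_right]

theorem hom_ext {a b z : ℕ} {h₁ h₂ : ob S (a + b) ⟶ ob S z}
    (hl : inl' a b ≫ h₁ = inl' a b ≫ h₂) (hr : inr' a b ≫ h₁ = inr' a b ≫ h₂) :
    h₁ = h₂ := by
  apply hom_eq
  intro p
  obtain ⟨t, i⟩ := p
  induction i using Fin.addCases with
  | left i => exact toFun_congr hl (t, i)
  | right i => exact toFun_congr hr (t, i)

end Aux

section Main
variable {S : Type} [Monoid S]

/-- Read an object of `SkFree S` back as a natural number. -/
@[reducible] def nb {S : Type} [Monoid S] (x : SkFree S) : ℕ := x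

theorem uniq_aux (φ ψ : SkFree S ⥤ SkFree S) (h1 : φ ⋙ ψ = 𝟭 _) (h2 : ψ ⋙ φ = 𝟭 _)
    {n m : ℕ} {z : SkFree S} (p q : φ.obj (ob S (n + m)) ⟶ z)
    (hp : φ.map (inl' n m) ≫ p = φ.map (inl' n m) ≫ q)
    (hq : φ.map (inr' n m) ≫ p = φ.map (inr' n m) ≫ q) : p = q := by
  letI : φ.IsEquivalence :=
    (CategoryTheory.Equivalence.mk φ ψ (eqToIso h1.symm) (eqToIso h2)).isEquivalence_functor
  obtain ⟨w, rfl⟩ : ∃ w, φ.obj w = z := ⟨ψ.obj z, Functor.congr_obj h2 z⟩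
  obtain ⟨p', rfl⟩ := φ.map_surjective p
  obtain ⟨q', rfl⟩ := φ.map_surjective q
  rw [← Functor.map_comp, ← Functor.map_comp] at hp hq
  exact congrArg φ.map (hom_ext (φ.map_injective hp) (φ.map_injective hq))

theorem eqToHom_sandwich {C : Type*} [Category C] {X X2 Y Y1 : C} (f : X ⟶ Y)
    (h : X = X2) (k : X2 = X) (k' : Y = Y1) (h' : Y1 = Y) :
    (eqToHom h ≫ (eqToHom k ≫ f ≫ eqToHom k')) ≫ eqToHom h' = f := by
  cases k; cases k'; simp

theorem obj_add (φ ψ : SkFree S ⥤ SkFree S) (h1 : φ ⋙ ψ = 𝟭 _) (h2 : ψ ⋙ φ = 𝟭 _)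
    (n m : ℕ) :
    φ.obj (ob S (n + m)) = ob S (nb (φ.obj (ob S n)) + nb (φ.obj (ob S m))) := by
  have hψφ : ∀ a : SkFree S, ψ.obj (φ.obj a) = a := fun a => Functor.congr_obj h1 a
  have hφψ : ∀ a : SkFree S, φ.obj (ψ.obj a) = a := fun a => Functor.congr_obj h2 a
  set A : ℕ := nb (φ.obj (ob S n)) with hA
  set B : ℕ := nb (φ.obj (ob S m)) with hB
  -- the comparison morphisms
  let k : ob S (A + B) ⟶ φ.obj (ob S (n + m)) :=
    copair (φ.map (inl' n m)) (φ.map (inr' n m))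
  let u : ob S n ⟶ ψ.obj (ob S (A + B)) :=
    eqToHom (hψφ (ob S n)).symm ≫ ψ.map (inl' A B)
  let v : ob S m ⟶ ψ.obj (ob S (A + B)) :=
    eqToHom (hψφ (ob S m)).symm ≫ ψ.map (inr' A B)
  let l : φ.obj (ob S (n + m)) ⟶ ob S (A + B) :=
    φ.map (copair u v) ≫ eqToHom (hφψ (ob S (A + B)))
  have hcl : φ.map (ψ.map (inl' A B)) =
      eqToHom (hφψ (ob S A)) ≫ inl' A B ≫ eqToHom (hφψ (ob S (A + B))).symm :=
    Functor.congr_hom h2 (inl' A B)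
  have hcr : φ.map (ψ.map (inr' A B)) =
      eqToHom (hφψ (ob S B)) ≫ inr' A B ≫ eqToHom (hφψ (ob S (A + B))).symm :=
    Functor.congr_hom h2 (inr' A B)
  have hl1 : φ.map (inl' n m) ≫ l = inl' A B := by
    show φ.map (inl' n m) ≫ φ.map (copair u v) ≫ eqToHom _ = inl' A B
    erw [← Category.assoc, ← Functor.map_comp, inl_copair]
    show φ.map (eqToHom (hψφ (ob S n)).symm ≫ ψ.map (inl' A B)) ≫ eqToHom _ = inl' A B
    erw [Functor.map_comp, eqToHom_map, hcl]
    exact eqToHom_sandwich _ _ _ _ _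
  have hl2 : φ.map (inr' n m) ≫ l = inr' A B := by
    show φ.map (inr' n m) ≫ φ.map (copair u v) ≫ eqToHom _ = inr' A B
    erw [← Category.assoc, ← Functor.map_comp, inr_copair]
    show φ.map (eqToHom (hψφ (ob S m)).symm ≫ ψ.map (inr' A B)) ≫ eqToHom _ = inr' A B
    erw [Functor.map_comp, eqToHom_map, hcr]
    exact eqToHom_sandwich _ _ _ _ _
  have hk1 : inl' A B ≫ k = φ.map (inl' n m) := inl_copair _ _
  have hk2 : inr' A B ≫ k = φ.map (inr' n m) := inr_copair _ _
  have hkl : k ≫ l = 𝟙 _ := by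
    apply hom_ext
    · erw [← Category.assoc, hk1, hl1, Category.comp_id]
    · erw [← Category.assoc, hk2, hl2, Category.comp_id]
  have hlk : l ≫ k = 𝟙 _ := by
    apply uniq_aux φ ψ h1 h2
    · erw [← Category.assoc, hl1, hk1, Category.comp_id]
    · erw [← Category.assoc, hl2, hk2, Category.comp_id]
  exact (ibn k l hkl hlk).symm

end Main

/-- Every automorphism of the skeleton category `_S𝒜⁰_Sk` of finitely
generated free left `S`-acts is stable: `φ(Fₙ) = Fₙ` for every object `Fₙ`. -/
theorem automorphism_stable (S : Type) [Monoid S]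
    (φ : SkFree S ⥤ SkFree S) (hφ : IsCatAutomorphism φ) (n : SkFree S) :
    φ.obj n = n := by
  obtain ⟨ψ, h1, h2⟩ := hφ
  have hadd : ∀ a b : ℕ, nb (φ.obj (ob S (a + b))) = nb (φ.obj (ob S a)) + nb (φ.obj (ob S b)) :=
    fun a b => congrArg nb (obj_add φ ψ h1 h2 a b)
  have h0 : nb (φ.obj (ob S 0)) = 0 := by have := hadd 0 0; simp only [Nat.add_zero] at this; omega
  have hmul : ∀ a : ℕ, nb (φ.obj (ob S a)) = a * nb (φ.obj (ob S 1)) := by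
    intro a
    induction a with
    | zero => simpa using h0
    | succ a ih => rw [hadd a 1, ih]; ring
  have hone : nb (φ.obj (ob S 1)) = 1 := by
    have hs : nb (φ.obj (ob S (nb (ψ.obj (ob S 1))))) = 1 :=
      congrArg nb (Functor.congr_obj h2 (ob S 1))
    rw [hmul] at hs
    exact Nat.dvd_one.mp (dvd_of_mul_left_eq _ hs)
  have := hmul (nb n)
  rw [hone, mul_one] at this
  exact this
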